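/- Let G be an n×n complex Hermitian matrix all of whose eigenvalues lie in [0,1], such that 1 is a simple eigenvalue of G with unit eigenvector ψ satisfying π_min := min_x |ψ_x|² > 0, and let Δ := 1 − λ₂ > 0 where λ₂ is the second-largest eigenvalue of G counted with multiplicity. Then for every pair of standard basis indices u, v there exists a natural number k with k ≤ (1 + 1/√(2Δ)) · log(2/π_min) + 1 and (G^k)_{u,v} ≠ 0. -/

import Mathlib

open Matrix

section AuxCheb
open Polynomial Polynomial.Chebyshev Real

private lemma cheb_cosh (t : ℝ) : ∀ d : ℕ, ((T ℝ (d : ℤ)).eval (Real.cosh t)) = Real.cosh (d * t) := by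
  have key : ∀ d : ℕ, ((T ℝ (d : ℤ)).eval (Real.cosh t)) = Real.cosh (d * t) ∧
      ((T ℝ ((d : ℤ) + 1)).eval (Real.cosh t)) = Real.cosh ((d + 1) * t) := by
    intro d
    induction d with
    | zero => simp [T_zero, T_one]
    | succ m ih =>
      refine ⟨by exact_mod_cast ih.2, ?_⟩
      have h2 : ((m+1 : ℕ) : ℤ) + 1 = (m : ℤ) + 2 := by push_cast; ring
      rw [h2, T_add_two]
      have hc : Real.cosh ((m + 1 + 1) * t) = 2 * Real.cosh t * Real.cosh ((m+1)*t) - Real.cosh (m*t) := by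
        have e1 : (m + 1 + 1 : ℝ) * t = (m+1)*t + t := by ring
        have e2 : (m : ℝ) * t = (m+1)*t - t := by ring
        rw [e1, e2, Real.cosh_add, Real.cosh_sub]; ring
      simp only [eval_sub, eval_mul, eval_ofNat, eval_X]
      push_cast
      rw [ih.1, ih.2, hc]
  exact fun d => (key d).1

private lemma cheb_natdeg : ∀ d : ℕ, (T ℝ (d : ℤ)).natDegree ≤ d := by
  have key : ∀ d : ℕ, (T ℝ (d : ℤ)).natDegree ≤ d ∧ (T ℝ ((d : ℤ) + 1)).natDegree ≤ d + 1 := by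
    intro d
    induction d with
    | zero => simp [T_zero, T_one, Polynomial.natDegree_X_le]
    | succ m ih =>
      refine ⟨by exact_mod_cast ih.2, ?_⟩
      have h2 : ((m+1 : ℕ) : ℤ) + 1 = (m : ℤ) + 2 := by push_cast; ring
      rw [h2, T_add_two]
      refine le_trans (Polynomial.natDegree_sub_le _ _) (max_le ?_ (le_trans ih.1 (by omega)))
      refine le_trans (Polynomial.natDegree_mul_le) ?_
      have : (2 * X : ℝ[X]).natDegree ≤ 1 := le_trans (Polynomial.natDegree_mul_le) (by simp)
      omega
  exact fun d => (key d).1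

private lemma cheb_abs_le (d : ℕ) {x : ℝ} (h1 : -1 ≤ x) (h2 : x ≤ 1) : |(T ℝ (d : ℤ)).eval x| ≤ 1 := by
  have : x = Real.cos (Real.arccos x) := (Real.cos_arccos h1 h2).symm
  rw [this, T_real_cos]
  exact Real.abs_cos_le_one _

private lemma cheb_analytic (Δ pm : ℝ) (hΔpos : 0 < Δ) (hpm0 : 0 < pm) (hpm1 : pm ≤ 1) :
    ∃ (d : ℕ) (M b : ℝ), 0 < b ∧ 1 - min Δ (1/2) ≤ b ∧
      (T ℝ (d : ℤ)).eval b⁻¹ = M ∧ 1 < M * pm ∧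
      (d : ℝ) ≤ (1 + 1 / Real.sqrt (2 * Δ)) * Real.log (2 / pm) + 1 := by
  set δ : ℝ := min Δ (1/2) with hδdef
  have hδ0 : 0 < δ := lt_min hΔpos (by norm_num)
  have hδle : δ ≤ 1/2 := min_le_right _ _
  set b : ℝ := 1 - δ with hbdef
  have hb0 : 0 < b := by simp only [hbdef]; linarith
  have hb1 : b < 1 := by simp only [hbdef]; linarith
  set s : ℝ := Real.sqrt (2 * δ) with hsdef
  have hs0 : 0 < s := Real.sqrt_pos.mpr (by linarith)
  set L : ℝ := Real.log (2 / pm) with hLdef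
  have hL0 : 0 < L := Real.log_pos (by rw [lt_div_iff₀ hpm0]; linarith)
  set d : ℕ := ⌈L / s⌉₊ with hddef
  set y : ℝ := b⁻¹ with hydef
  have hy1 : 1 < y := one_lt_inv_iff₀.mpr ⟨hb0, hb1⟩
  set t : ℝ := Real.arsinh (Real.sqrt (y^2 - 1)) with htdef
  have ht0 : 0 ≤ t := Real.arsinh_nonneg_iff.mpr (Real.sqrt_nonneg _)
  have hcosht : Real.cosh t = y := by
    have h1 : Real.cosh t ^ 2 = y ^ 2 := by
      rw [Real.cosh_sq, htdef, Real.sinh_arsinh, Real.sq_sqrt (by nlinarith)]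
      ring
    have h2 : Real.cosh t = Real.sqrt (Real.cosh t ^ 2) := (Real.sqrt_sq (Real.cosh_pos t).le).symm
    rw [h2, h1, Real.sqrt_sq (by linarith)]
  have hst : s ≤ t := by
    have hcs : Real.cosh s ≤ Real.cosh t := by
      rw [hcosht]
      calc Real.cosh s ≤ Real.exp (s ^ 2 / 2) := Real.cosh_le_exp_half_sq s
        _ = Real.exp δ := by rw [hsdef, Real.sq_sqrt (by linarith)]; norm_num
        _ ≤ y := by
            have h1 : 1 - δ ≤ Real.exp (-δ) := by
              have := Real.add_one_le_exp (-δ); linarith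
            have h2 : b * Real.exp δ ≤ 1 := by
              calc b * Real.exp δ ≤ Real.exp (-δ) * Real.exp δ := by
                    apply mul_le_mul_of_nonneg_right _ (Real.exp_pos δ).le
                    rw [hbdef]; exact h1
                _ = 1 := by rw [← Real.exp_add]; simp
            have hby : b * y = 1 := by rw [hydef]; exact mul_inv_cancel₀ hb0.ne'
            nlinarith [Real.exp_pos δ]
    have := Real.cosh_le_cosh.mp hcs
    rwa [abs_of_nonneg hs0.le, abs_of_nonneg ht0] at this
  set M : ℝ := Real.cosh (d * t) with hMdef
  refine ⟨d, M, b, hb0, le_refl _, ?_, ?_, ?_⟩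
  · show eval y (T ℝ (d : ℤ)) = M
    rw [← hcosht]; exact cheb_cosh t d
  · have h1 : Real.exp L ≤ Real.exp ((d : ℝ) * t) := by
      apply Real.exp_le_exp.mpr
      calc L = (L / s) * s := by field_simp
        _ ≤ (d : ℝ) * s := by
            apply mul_le_mul_of_nonneg_right (Nat.le_ceil _) hs0.le
        _ ≤ (d : ℝ) * t := mul_le_mul_of_nonneg_left hst (Nat.cast_nonneg d)
    have h2 : Real.exp ((d:ℝ) * t) / 2 < M := by
      rw [hMdef, Real.cosh_eq]
      have := Real.exp_pos (-((d:ℝ) * t))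
      linarith
    have h3 : Real.exp L = 2 / pm := Real.exp_log (by positivity)
    have h4 : 1 / pm < M := by
      rw [h3] at h1
      calc 1 / pm = (2 / pm) / 2 := by ring
        _ ≤ Real.exp ((d:ℝ)*t) / 2 := by linarith
        _ < M := h2
    calc 1 = (1 / pm) * pm := by field_simp
      _ < M * pm := by apply mul_lt_mul_of_pos_right h4 hpm0
  · have hd1 : (d : ℝ) < L / s + 1 := Nat.ceil_lt_add_one (by positivity)
    have hs_bound : 1 / s ≤ 1 + 1 / Real.sqrt (2 * Δ) := by
      rcases le_total Δ (1/2) with h | h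
      · have : δ = Δ := min_eq_left h
        rw [hsdef, this]
        have : 0 < Real.sqrt (2 * Δ) := Real.sqrt_pos.mpr (by linarith)
        linarith [one_div_pos.mpr this]
      · have hδ : δ = 1/2 := min_eq_right h
        rw [hsdef, hδ]
        norm_num
    calc (d : ℝ) ≤ L / s + 1 := le_of_lt hd1
      _ = (1/s) * L + 1 := by ring
      _ ≤ (1 + 1 / Real.sqrt (2 * Δ)) * L + 1 := by nlinarith

end AuxCheb

theorem stmt14 (n : ℕ) (hn : 0 < n)
    (G : Matrix (Fin n) (Fin n) ℂ) (hG : G.IsHermitian)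
    -- all eigenvalues of `G` lie in `[0,1]`
    (hspec : ∀ i, hG.eigenvalues i ∈ Set.Icc (0 : ℝ) 1)
    -- `ψ` is a unit eigenvector of `G` for the simple eigenvalue 1
    (ψ : Fin n → ℂ) (hψunit : star ψ ⬝ᵥ ψ = 1) (hψeig : G.mulVec ψ = ψ)
    (hsimple : ∀ φ : Fin n → ℂ, G.mulVec φ = φ → ∃ c : ℂ, φ = c • ψ)
    -- `π_min` is the minimum squared overlap of `ψ` with the basis, and is positive
    (hπmin : 0 < ⨅ x, ‖ψ x‖ ^ 2)
    -- `Δ = 1 − λ₂`: all eigenvalues other than the simple top eigenvalue 1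
    -- are at most `1 − Δ`
    (Δ : ℝ) (hΔpos : 0 < Δ)
    (hgap : ∀ i, hG.eigenvalues i = 1 ∨ hG.eigenvalues i ≤ 1 - Δ) :
    ∀ u v : Fin n, ∃ k : ℕ,
      (k : ℝ) ≤ (1 + 1 / Real.sqrt (2 * Δ))
          * Real.log (2 / ⨅ x, ‖ψ x‖ ^ 2) + 1 ∧
      (G ^ k) u v ≠ 0 := by
  intro u v
  haveI : Nonempty (Fin n) := ⟨⟨0, hn⟩⟩
  set pm : ℝ := ⨅ x, ‖ψ x‖ ^ 2 with hpmdef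
  -- basic facts about pm
  have hpmle : ∀ x, pm ≤ ‖ψ x‖ ^ 2 := fun x =>
    ciInf_le (Set.Finite.bddBelow (Set.finite_range _)) x
  have hψprod : ∀ x, (starRingEnd ℂ) (ψ x) * ψ x = ((‖ψ x‖ ^ 2 : ℝ) : ℂ) := by
    intro x
    rw [mul_comm, Complex.mul_conj, Complex.sq_norm]
  have hsumψ : ∑ x, ‖ψ x‖ ^ 2 = 1 := by
    have h1 : ∑ x, (starRingEnd ℂ) (ψ x) * ψ x = 1 := by rw [← hψunit]; rfl
    have h2 : ((∑ x, ‖ψ x‖ ^ 2 : ℝ) : ℂ) = 1 := by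
      rw [Complex.ofReal_sum, ← h1]
      exact (Finset.sum_congr rfl fun x _ => (hψprod x).symm)
    exact_mod_cast h2
  have hpm1 : pm ≤ 1 := by
    refine le_trans (hpmle ⟨0, hn⟩) ?_
    rw [← hsumψ]
    exact Finset.single_le_sum (f := fun x => ‖ψ x‖ ^ 2) (fun x _ => by positivity) (Finset.mem_univ _)
  -- spectral setup
  set V : Matrix (Fin n) (Fin n) ℂ := (hG.eigenvectorUnitary : Matrix (Fin n) (Fin n) ℂ) with hV
  set e : Fin n → ℝ := hG.eigenvalues with he
  have hVV : V * star V = 1 := (Matrix.mem_unitaryGroup_iff).mp hG.eigenvectorUnitary.2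
  have hVV' : star V * V = 1 := (Matrix.mem_unitaryGroup_iff').mp hG.eigenvectorUnitary.2
  have hspec' : G = V * diagonal (fun i => (e i : ℂ)) * star V := by
    have hst := hG.spectral_theorem
    rw [Unitary.conjStarAlgAut_apply] at hst
    exact hst
  have hpow : ∀ k : ℕ, G ^ k = V * diagonal (fun i => (e i : ℂ) ^ k) * star V := by
    intro k
    induction k with
    | zero => simp [pow_zero, Matrix.diagonal_one, hVV]
    | succ m ih =>
      rw [pow_succ, ih, hspec']
      have : V * diagonal (fun i => (e i:ℂ)^m) * star V * (V * diagonal (fun i => (e i:ℂ)) * star V)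
        = V * (diagonal (fun i => (e i:ℂ)^m) * ((star V * V) * diagonal (fun i => (e i:ℂ)))) * star V := by
          simp only [Matrix.mul_assoc]
      rw [this, hVV', Matrix.one_mul, Matrix.diagonal_mul_diagonal]
      simp [pow_succ]
  have hentry : ∀ k : ℕ, (G ^ k) u v = ∑ i, (e i : ℂ) ^ k * (V u i * (starRingEnd ℂ) (V v i)) := by
    intro k
    rw [hpow k, Matrix.mul_apply]
    refine Finset.sum_congr rfl fun i _ => ?_
    rw [Matrix.mul_diagonal, Matrix.star_eq_conjTranspose, Matrix.conjTranspose_apply]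
    ring_nf
    rfl
  -- the distinguished index i₀
  obtain ⟨i₀, he₀, huniq, hwi₀⟩ : ∃ i₀ : Fin n, e i₀ = 1 ∧ (∀ j, e j = 1 → j = i₀) ∧
      V u i₀ * (starRingEnd ℂ) (V v i₀) = ψ u * (starRingEnd ℂ) (ψ v) := by
    set φ : Fin n → ℂ := star V *ᵥ ψ with hφdef
    have hφ : V *ᵥ φ = ψ := by
      rw [hφdef, Matrix.mulVec_mulVec, hVV, Matrix.one_mulVec]
    have hDφ : ∀ i, (e i : ℂ) * φ i = φ i := by
      have h1 : (V * diagonal (fun i => (e i : ℂ)) * star V) *ᵥ ψ = ψ := by rw [← hspec']; exact hψeig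
      have h2 : (diagonal (fun i => (e i : ℂ))) *ᵥ φ = φ := by
        have h3 : star V *ᵥ ((V * diagonal (fun i => (e i : ℂ)) * star V) *ᵥ ψ) = star V *ᵥ ψ :=
          congrArg _ h1
        rw [Matrix.mulVec_mulVec] at h3
        have heq : star V * (V * diagonal (fun i => (e i : ℂ)) * star V)
            = diagonal (fun i => (e i : ℂ)) * star V := by
          simp only [← Matrix.mul_assoc]
          rw [hVV', Matrix.one_mul]
        rw [heq, ← Matrix.mulVec_mulVec] at h3
        exact h3
      intro i
      have := congrFun h2 i
      rwa [Matrix.mulVec_diagonal] at this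
    have hφne : φ ≠ 0 := by
      intro h0
      rw [h0, Matrix.mulVec_zero] at hφ
      rw [← hφ] at hψunit
      simp at hψunit
    obtain ⟨i₀, hφi₀'⟩ := Function.ne_iff.mp hφne
    have hφi₀ : φ i₀ ≠ 0 := by simpa using hφi₀'
    have he₀ : e i₀ = 1 := by
      have h1 : ((e i₀ : ℂ) - 1) * φ i₀ = 0 := by rw [sub_mul, one_mul, hDφ i₀, sub_self]
      have h2 := (mul_eq_zero.mp h1).resolve_right hφi₀
      have h3 : (e i₀ : ℂ) = 1 := by linear_combination h2
      exact_mod_cast h3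
    have hcol : ∀ j, e j = 1 → ∃ c : ℂ, (starRingEnd ℂ) c * c = 1 ∧ ∀ x, V x j = c * ψ x := by
      intro j hj
      have hcolvec : (fun x => V x j) = V *ᵥ Pi.single j 1 := by
        funext x; simp [Matrix.mulVec_single]
      have hGV : G * V = V * diagonal (fun i => (e i : ℂ)) := by
        rw [hspec', Matrix.mul_assoc, Matrix.mul_assoc, hVV', Matrix.mul_one]
      have hDs : (diagonal fun i => (e i : ℂ)) *ᵥ Pi.single j 1 = Pi.single j 1 := by
        funext x
        rw [Matrix.mulVec_diagonal]
        rcases eq_or_ne x j with rfl | hx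
        · simp [hj]
        · simp [Pi.single_eq_of_ne hx]
      have heig : G *ᵥ (fun x => V x j) = fun x => V x j := by
        rw [hcolvec, Matrix.mulVec_mulVec, hGV, ← Matrix.mulVec_mulVec, hDs]
      obtain ⟨c, hc⟩ := hsimple _ heig
      have hnorm : ∑ x, (starRingEnd ℂ) (V x j) * V x j = 1 := by
        have := congrFun (congrFun hVV' j) j
        rw [Matrix.mul_apply] at this
        simpa [Matrix.star_eq_conjTranspose, Matrix.conjTranspose_apply, Matrix.one_apply] using this
      have hcc : (starRingEnd ℂ) c * c = 1 := by
        have h1 : ∑ x, (starRingEnd ℂ) (c * ψ x) * (c * ψ x) = 1 := by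
          rw [← hnorm]
          refine Finset.sum_congr rfl fun x _ => ?_
          rw [congrFun hc x]
          rfl
        have hψs : ∑ x, (starRingEnd ℂ) (ψ x) * ψ x = 1 := by
          rw [← hψunit]; rfl
        calc (starRingEnd ℂ) c * c = (starRingEnd ℂ) c * c * ∑ x, (starRingEnd ℂ) (ψ x) * ψ x := by
              rw [hψs, mul_one]
          _ = ∑ x, (starRingEnd ℂ) (c * ψ x) * (c * ψ x) := by
              rw [Finset.mul_sum]
              exact Finset.sum_congr rfl fun x _ => by simp only [_root_.map_mul]; ring
          _ = 1 := h1
      exact ⟨c, hcc, fun x => by rw [congrFun hc x]; rfl⟩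
    obtain ⟨c₀, hc₀cc, hc₀⟩ := hcol i₀ he₀
    have huniq : ∀ j, e j = 1 → j = i₀ := by
      intro j hj
      by_contra hne
      obtain ⟨cj, hcjcc, hcj⟩ := hcol j hj
      have horth : ∑ x, (starRingEnd ℂ) (V x j) * V x i₀ = 0 := by
        have := congrFun (congrFun hVV' j) i₀
        rw [Matrix.mul_apply] at this
        simpa [Matrix.star_eq_conjTranspose, Matrix.conjTranspose_apply, Matrix.one_apply, hne] using this
      have hψs : ∑ x, (starRingEnd ℂ) (ψ x) * ψ x = 1 := by rw [← hψunit]; rfl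
      have hval : ∑ x, (starRingEnd ℂ) (V x j) * V x i₀ = (starRingEnd ℂ) cj * c₀ := by
        calc ∑ x, (starRingEnd ℂ) (V x j) * V x i₀
            = ∑ x, (starRingEnd ℂ) cj * c₀ * ((starRingEnd ℂ) (ψ x) * ψ x) := by
              refine Finset.sum_congr rfl fun x _ => ?_
              rw [hcj x, hc₀ x, _root_.map_mul]; ring
          _ = (starRingEnd ℂ) cj * c₀ := by rw [← Finset.mul_sum, hψs, mul_one]
      rw [hval] at horth
      have hcj0 : cj ≠ 0 := by intro h; rw [h] at hcjcc; simp at hcjcc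
      have hc00 : c₀ ≠ 0 := by intro h; rw [h] at hc₀cc; simp at hc₀cc
      exact (mul_ne_zero (by simpa using hcj0) hc00) horth
    refine ⟨i₀, he₀, huniq, ?_⟩
    rw [hc₀ u, hc₀ v, _root_.map_mul]
    calc c₀ * ψ u * ((starRingEnd ℂ) c₀ * (starRingEnd ℂ) (ψ v))
        = ((starRingEnd ℂ) c₀ * c₀) * (ψ u * (starRingEnd ℂ) (ψ v)) := by ring
      _ = ψ u * (starRingEnd ℂ) (ψ v) := by rw [hc₀cc, one_mul]
  -- row norms and Cauchy–Schwarz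
  have hrow : ∀ x : Fin n, ∑ i, ‖V x i‖ ^ 2 = 1 := by
    intro x
    have h1 := congrFun (congrFun hVV x) x
    rw [Matrix.mul_apply] at h1
    simp only [Matrix.star_eq_conjTranspose, Matrix.conjTranspose_apply, Matrix.one_apply_eq] at h1
    have h2 : ((∑ i, ‖V x i‖ ^ 2 : ℝ) : ℂ) = 1 := by
      rw [Complex.ofReal_sum, ← h1]
      refine Finset.sum_congr rfl fun i _ => ?_
      rw [Complex.sq_norm]
      rw [← Complex.mul_conj]
      rfl
    exact_mod_cast h2
  have hCS : ∑ i, ‖V u i‖ * ‖V v i‖ ≤ 1 := by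
    have h := Finset.sum_mul_sq_le_sq_mul_sq Finset.univ (fun i => ‖V u i‖)
      (fun i => ‖V v i‖)
    rw [hrow u, hrow v, mul_one] at h
    have hnn : 0 ≤ ∑ i, ‖V u i‖ * ‖V v i‖ :=
      Finset.sum_nonneg fun i _ => mul_nonneg (norm_nonneg _) (norm_nonneg _)
    nlinarith
  -- the Chebyshev polynomial
  obtain ⟨d, M, b, hb0, hble, hTM, hMpm, hdbound⟩ := cheb_analytic Δ pm hΔpos hπmin hpm1
  set q : Polynomial ℝ := (Polynomial.Chebyshev.T ℝ (d : ℤ)).comp (Polynomial.C b⁻¹ * Polynomial.X) with hq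
  have hqdeg : q.natDegree ≤ d := by
    refine le_trans Polynomial.natDegree_comp_le ?_
    have h1 : (Polynomial.C b⁻¹ * Polynomial.X : Polynomial ℝ).natDegree ≤ 1 :=
      le_trans (Polynomial.natDegree_mul_le) (by simp)
    calc (Polynomial.Chebyshev.T ℝ (d:ℤ)).natDegree * (Polynomial.C b⁻¹ * Polynomial.X : Polynomial ℝ).natDegree
        ≤ d * 1 := Nat.mul_le_mul (cheb_natdeg d) h1
      _ = d := mul_one d
  have hqeval : ∀ x : ℝ, q.eval x = (Polynomial.Chebyshev.T ℝ (d:ℤ)).eval (b⁻¹ * x) := by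
    intro x
    rw [hq, Polynomial.eval_comp, Polynomial.eval_mul, Polynomial.eval_C, Polynomial.eval_X]
  have hq1 : q.eval 1 = M := by rw [hqeval, mul_one, hTM]
  have hqsmall : ∀ i, i ≠ i₀ → |q.eval (e i)| ≤ 1 := by
    intro i hi
    have hei0 : 0 ≤ e i := (hspec i).1
    have heib : e i ≤ b := by
      rcases hgap i with h | h
      · exact absurd (huniq i h) hi
      · calc e i ≤ 1 - Δ := h
          _ ≤ 1 - min Δ (1/2) := by have := min_le_left Δ (1/2); linarith
          _ ≤ b := hble
    rw [hqeval]
    apply cheb_abs_le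
    · have : 0 ≤ b⁻¹ * e i := by positivity
      linarith
    · rw [inv_mul_le_iff₀ hb0]
      linarith
  -- the key sum
  set w : Fin n → ℂ := fun i => V u i * (starRingEnd ℂ) (V v i) with hw
  set S : ℂ := ∑ i, ((q.eval (e i) : ℝ) : ℂ) * w i with hS
  have habsw : ∀ i, ‖w i‖ = ‖V u i‖ * ‖V v i‖ := by
    intro i
    rw [hw]
    simp [_root_.map_mul, Complex.norm_conj]
  have hSsum : S = ∑ k ∈ Finset.range (d+1), ((q.coeff k : ℝ) : ℂ) * (G ^ k) u v := by
    rw [hS]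
    have h1 : ∀ i : Fin n, ((q.eval (e i) : ℝ) : ℂ) * w i
        = ∑ k ∈ Finset.range (d+1), ((q.coeff k : ℝ):ℂ) * ((e i : ℂ) ^ k * w i) := by
      intro i
      rw [Polynomial.eval_eq_sum_range' (lt_of_le_of_lt hqdeg (Nat.lt_succ_self d))]
      push_cast
      rw [Finset.sum_mul]
      exact Finset.sum_congr rfl fun k _ => by ring
    calc ∑ i, ((q.eval (e i):ℝ):ℂ) * w i
        = ∑ i, ∑ k ∈ Finset.range (d+1), ((q.coeff k:ℝ):ℂ) * ((e i:ℂ)^k * w i) :=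
          Finset.sum_congr rfl fun i _ => h1 i
      _ = ∑ k ∈ Finset.range (d+1), ∑ i, ((q.coeff k:ℝ):ℂ) * ((e i:ℂ)^k * w i) := Finset.sum_comm
      _ = ∑ k ∈ Finset.range (d+1), ((q.coeff k:ℝ):ℂ) * (G^k) u v := by
          refine Finset.sum_congr rfl fun k _ => ?_
          rw [hentry k, Finset.mul_sum]
  have hM0 : 0 < M := by nlinarith
  have hwmain : pm ≤ ‖w i₀‖ := by
    have h1 : Real.sqrt pm ≤ ‖ψ u‖ := by
      rw [show ‖ψ u‖ = Real.sqrt (‖ψ u‖^2) from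
        (Real.sqrt_sq (norm_nonneg _)).symm]
      exact Real.sqrt_le_sqrt (hpmle u)
    have h2 : Real.sqrt pm ≤ ‖ψ v‖ := by
      rw [show ‖ψ v‖ = Real.sqrt (‖ψ v‖^2) from
        (Real.sqrt_sq (norm_nonneg _)).symm]
      exact Real.sqrt_le_sqrt (hpmle v)
    have h3 : ‖w i₀‖ = ‖ψ u‖ * ‖ψ v‖ := by
      show ‖V u i₀ * (starRingEnd ℂ) (V v i₀)‖ = _
      rw [hwi₀]
      simp [_root_.map_mul, Complex.norm_conj]
    calc pm = Real.sqrt pm * Real.sqrt pm := (Real.mul_self_sqrt hπmin.le).symm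
      _ ≤ ‖ψ u‖ * ‖ψ v‖ :=
          mul_le_mul h1 h2 (Real.sqrt_nonneg _) (norm_nonneg _)
      _ = ‖w i₀‖ := h3.symm
  have hSne : S ≠ 0 := by
    have hsplit : S = ((q.eval (e i₀):ℝ):ℂ) * w i₀
        + ∑ i ∈ Finset.univ.erase i₀, ((q.eval (e i):ℝ):ℂ) * w i := by
      rw [hS, ← Finset.add_sum_erase _ _ (Finset.mem_univ i₀)]
    have hmain : M * pm ≤ ‖((q.eval (e i₀):ℝ):ℂ) * w i₀‖ := by
      rw [norm_mul, Complex.norm_real, Real.norm_eq_abs, he₀, hq1, abs_of_pos hM0]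
      exact mul_le_mul_of_nonneg_left hwmain hM0.le
    have hrest : ‖∑ i ∈ Finset.univ.erase i₀, ((q.eval (e i):ℝ):ℂ) * w i‖ ≤ 1 := by
      calc ‖∑ i ∈ Finset.univ.erase i₀, ((q.eval (e i):ℝ):ℂ) * w i‖
          ≤ ∑ i ∈ Finset.univ.erase i₀, ‖((q.eval (e i):ℝ):ℂ) * w i‖ :=
            norm_sum_le _ _
        _ ≤ ∑ i ∈ Finset.univ.erase i₀, ‖w i‖ := by
            refine Finset.sum_le_sum fun i hi => ?_
            rw [norm_mul, Complex.norm_real, Real.norm_eq_abs]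
            calc |q.eval (e i)| * ‖w i‖ ≤ 1 * ‖w i‖ :=
                mul_le_mul_of_nonneg_right (hqsmall i (Finset.ne_of_mem_erase hi))
                  (norm_nonneg _)
              _ = ‖w i‖ := one_mul _
        _ ≤ ∑ i, ‖w i‖ :=
            Finset.sum_le_sum_of_subset_of_nonneg (Finset.erase_subset _ _)
              (fun i _ _ => norm_nonneg _)
        _ ≤ 1 := by
            calc ∑ i, ‖w i‖ = ∑ i, ‖V u i‖ * ‖V v i‖ :=
                Finset.sum_congr rfl fun i _ => habsw i
              _ ≤ 1 := hCS
    intro h0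
    have hmain_eq : ((q.eval (e i₀):ℝ):ℂ) * w i₀
        = - ∑ i ∈ Finset.univ.erase i₀, ((q.eval (e i):ℝ):ℂ) * w i := by
      rw [h0] at hsplit
      linear_combination -hsplit
    rw [hmain_eq, norm_neg] at hmain
    linarith
  obtain ⟨k, hk, hkne⟩ := Finset.exists_ne_zero_of_sum_ne_zero
    (show (∑ k ∈ Finset.range (d+1), ((q.coeff k : ℝ) : ℂ) * (G ^ k) u v) ≠ 0 by
      rw [← hSsum]; exact hSne)
  refine ⟨k, ?_, fun h => hkne (by rw [h, mul_zero])⟩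
  have hk' : k ≤ d := Nat.lt_succ_iff.mp (Finset.mem_range.mp hk)
  calc (k:ℝ) ≤ (d:ℝ) := Nat.cast_le.mpr hk'
    _ ≤ _ := hdbound
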